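/- For all integers k ≥ 1 and i ≥ 0, Σ_{r=0}^{k} (−1)^{k−r} C(i+r, r) · (C(i+2k, k−r) − C(i+2k, k−r−1)) = 0, where C(n,m) = 0 whenever m < 0 or m > n. -/

import Mathlib

open Finset

/-- Binomial coefficient `C(n,m)` with the convention that it is `0`
whenever `m < 0` or `m > n`. -/
def chooseZ (n : ℕ) (m : ℤ) : ℤ := if 0 ≤ m then (n.choose m.toNat : ℤ) else 0

lemma chooseZ_coe (n j : ℕ) : chooseZ n (j : ℤ) = (n.choose j : ℤ) := by
  simp [chooseZ]

def Q (i M m : ℕ) : ℤ :=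
  if i + 1 ≤ M then (-1) ^ m * ((M - i - 1).choose m : ℤ) else ((m + i - M).choose m : ℤ)

lemma Q_rec (i M m : ℕ) : Q i (M + 1) (m + 1) = Q i M (m + 1) - Q i M m := by
  unfold Q
  rcases lt_trichotomy M i with h | h | h
  · rw [if_neg (by omega), if_neg (by omega), if_neg (by omega)]
    have h1 : m + 1 + i - (M + 1) = m + i - M := by omega
    have h2 : m + 1 + i - M = (m + i - M) + 1 := by omega
    rw [h1, h2, Nat.choose_succ_succ]
    push_cast
    ring
  · subst h
    rw [if_pos (by omega), if_neg (by omega), if_neg (by omega)]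
    have h1 : M + 1 - M - 1 = 0 := by omega
    have h2 : m + 1 + M - M = m + 1 := by omega
    have h3 : m + M - M = m := by omega
    rw [h1, h2, h3, Nat.choose_self, Nat.choose_self]
    simp [Nat.choose_eq_zero_of_lt]
  · rw [if_pos (by omega), if_pos (by omega), if_pos (by omega)]
    have h1 : M + 1 - i - 1 = (M - i - 1) + 1 := by omega
    rw [h1, Nat.choose_succ_succ]
    push_cast
    ring

lemma P_eq (i : ℕ) : ∀ M m : ℕ,
    ∑ s ∈ range (m + 1), (-1 : ℤ) ^ s * (M.choose s : ℤ) * ((i + m - s).choose i : ℤ)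
      = Q i M m := by
  intro M
  induction M with
  | zero =>
    intro m
    rw [Finset.sum_eq_single 0]
    · unfold Q
      rw [if_neg (by omega)]
      have h1 : (i + m).choose i = (i + m).choose m := by
        rw [← Nat.choose_symm (show i ≤ i + m by omega), Nat.add_sub_cancel_left]
      rw [show m + i - 0 = i + m from by omega, ← h1]
      norm_num
    · intro b _ hb
      obtain ⟨c, rfl⟩ : ∃ c, b = c + 1 := ⟨b - 1, by omega⟩
      simp [Nat.choose_eq_zero_of_lt]
    · simp
  | succ M ih =>
    intro m
    cases m with
    | zero =>
      simp only [zero_add, Finset.sum_range_one, pow_zero, Nat.choose_zero_right,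
        Nat.sub_zero, Nat.cast_one, one_mul, mul_one]
      unfold Q
      split <;> simp
    | succ m =>
      rw [Q_rec, ← ih (m + 1), ← ih m]
      rw [Finset.sum_range_succ' (fun s => (-1 : ℤ) ^ s * ((M + 1).choose s : ℤ) *
        ((i + (m + 1) - s).choose i : ℤ)) (m + 1),
        Finset.sum_range_succ' (fun s => (-1 : ℤ) ^ s * (M.choose s : ℤ) *
        ((i + (m + 1) - s).choose i : ℤ)) (m + 1)]
      rw [eq_sub_iff_add_eq, add_right_comm]
      congr 1
      · rw [← Finset.sum_add_distrib]
        refine Finset.sum_congr rfl fun s _ => ?_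
        have h1 : i + (m + 1) - (s + 1) = i + m - s := by omega
        simp only [h1, Nat.choose_succ_succ]
        push_cast
        ring
      · simp

theorem catalan_triangle_identity_one :
    ∀ k i : ℕ, 1 ≤ k →
      ∑ r ∈ Finset.range (k + 1), (-1 : ℤ) ^ (k - r) * ((i + r).choose r : ℤ) *
        (chooseZ (i + 2 * k) ((k : ℤ) - r) - chooseZ (i + 2 * k) ((k : ℤ) - r - 1)) = 0 := by
  intro k i hk
  obtain ⟨j, rfl⟩ : ∃ j, k = j + 1 := ⟨k - 1, by omega⟩
  set N := i + 2 * (j + 1) with hN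
  simp only [mul_sub, Finset.sum_sub_distrib]
  have hsym : ∀ r : ℕ, ((i + r).choose r : ℤ) = ((i + r).choose i : ℤ) := by
    intro r
    rw [← Nat.choose_symm (Nat.le_add_right i r)]
    congr 2
    omega
  have hS1 : ∑ r ∈ Finset.range (j + 1 + 1), (-1 : ℤ) ^ (j + 1 - r) * ((i + r).choose r : ℤ) *
      chooseZ N (((j + 1 : ℕ) : ℤ) - r) = Q i N (j + 1) := by
    rw [← P_eq i N (j + 1), ← Finset.sum_range_reflect
      (fun s => (-1 : ℤ) ^ s * (N.choose s : ℤ) * ((i + (j + 1) - s).choose i : ℤ)) (j + 2)]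
    refine Finset.sum_congr rfl fun r hr => ?_
    rw [Finset.mem_range] at hr
    have hr' : r ≤ j + 1 := by omega
    have e1 : j + 2 - 1 - r = j + 1 - r := by omega
    have e2 : i + (j + 1) - (j + 1 - r) = i + r := by omega
    have e3 : ((j + 1 : ℕ) : ℤ) - (r : ℤ) = ((j + 1 - r : ℕ) : ℤ) := by
      rw [Nat.cast_sub hr']
    simp only [e1, e2, e3, chooseZ_coe, hsym]
    ring
  have hS2 : ∑ r ∈ Finset.range (j + 1 + 1), (-1 : ℤ) ^ (j + 1 - r) * ((i + r).choose r : ℤ) *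
      chooseZ N (((j + 1 : ℕ) : ℤ) - r - 1) = -Q i N j := by
    rw [Finset.sum_range_succ]
    have hlast : chooseZ N (((j + 1 : ℕ) : ℤ) - ((j + 1 : ℕ) : ℤ) - 1) = 0 := by
      rw [chooseZ]
      rw [if_neg (by push_cast; omega)]
    rw [hlast, mul_zero, add_zero]
    rw [← P_eq i N j]
    rw [show -∑ s ∈ range (j + 1), (-1 : ℤ) ^ s * (N.choose s : ℤ) * ((i + j - s).choose i : ℤ)
      = ∑ s ∈ range (j + 1), (-1 : ℤ) ^ (s + 1) * (N.choose s : ℤ) * ((i + j - s).choose i : ℤ) by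
        rw [← Finset.sum_neg_distrib]
        refine Finset.sum_congr rfl fun s _ => ?_
        ring]
    rw [← Finset.sum_range_reflect
      (fun s => (-1 : ℤ) ^ (s + 1) * (N.choose s : ℤ) * ((i + j - s).choose i : ℤ)) (j + 1)]
    refine Finset.sum_congr rfl fun r hr => ?_
    rw [Finset.mem_range] at hr
    have hr' : r ≤ j := by omega
    have e1 : j + 1 - 1 - r = j - r := by omega
    have e2 : i + j - (j - r) = i + r := by omega
    have e3 : (j - r) + 1 = j + 1 - r := by omega
    have e4 : ((j + 1 : ℕ) : ℤ) - (r : ℤ) - 1 = ((j - r : ℕ) : ℤ) := by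
      omega
    simp only [e1, e2, e3, e4, chooseZ_coe, hsym]
    ring
  rw [hS1, hS2]
  unfold Q
  rw [if_pos (by omega), if_pos (by omega)]
  have e1 : N - i - 1 = 2 * j + 1 := by omega
  have e2 : (2 * j + 1).choose (j + 1) = (2 * j + 1).choose j := by
    rw [← Nat.choose_symm (by omega : j + 1 ≤ 2 * j + 1)]
    congr 1
    omega
  rw [e1, e2]
  ring
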